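/- Let X be a real Hilbert space, 0 < α, C_g > 0, m : X × X → ℝ a continuous symmetric bilinear form with α‖Φ‖² ≤ m(Φ, Φ), and V_H ⊆ X a closed subspace with a continuous symmetric bilinear form m_H satisfying α‖Φ_H‖² ≤ m_H(Φ_H, Φ_H); write ‖Φ_H‖_{m_H} := √m_H(Φ_H, Φ_H). Let P_H : X → V_H satisfy m_H(P_H Φ, Ψ_H) = m(Φ, Ψ_H) for all Ψ_H ∈ V_H. For each τ ≥ 0 let g(τ; ·, ·) : X × X → ℝ and g_H(τ; ·, ·) : V_H × V_H → ℝ be bilinear forms with |g(τ; Φ, Ψ)| ≤ C_g‖Φ‖‖Ψ‖ for all τ, Φ, Ψ, and let G(τ) : X → X and G_H(τ) : V_H → V_H satisfy m(G(τ)Φ, Ψ) = g(τ; Φ, Ψ) and m_H(G_H(τ)Φ_H, Ψ_H) = g_H(τ; Φ_H, Ψ_H); assume τ ↦ G(τ) and τ ↦ G_H(τ) are continuous in operator norm. Then for every s ≥ 0 and all continuous Φ : [0, s] → X and Φ_I : [0, s] → V_H: ‖∫₀ˢ ( P_H(G(s − ρ)(Φ(ρ))) − G_H(s − ρ)(Φ_I(ρ))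 ) dρ‖_{m_H} ≤ (C_g / √α) ∫₀ˢ ‖Φ(ρ) − Φ_I(ρ)‖ dρ + sup { |∫₀ˢ ( g(s − ρ; Φ_I(ρ), Ψ_H) − g_H(s − ρ; Φ_I(ρ), Ψ_H) ) dρ| : Ψ_H ∈ V_H, ‖Ψ_H‖_{m_H} ≤ 1 }. -/

import Mathlib

lemma bilin_bound {E F : Type*} [NormedAddCommGroup E] [NormedSpace ℝ E]
    [NormedAddCommGroup F] [NormedSpace ℝ F]
    (B : E →ₗ[ℝ] F →ₗ[ℝ] ℝ) (h : Continuous fun p : E × F => B p.1 p.2) :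
    ∃ C, 0 < C ∧ ∀ x y, |B x y| ≤ C * ‖x‖ * ‖y‖ := by
  have h0 : (fun p : E × F => B p.1 p.2) (0, 0) = 0 := by simp
  have hc := h.continuousAt (x := ((0 : E), (0 : F)))
  rw [Metric.continuousAt_iff] at hc
  obtain ⟨δ, hδ, hball⟩ := hc 1 one_pos
  refine ⟨4 / δ ^ 2, by positivity, fun x y => ?_⟩
  rcases eq_or_ne x 0 with rfl | hx
  · simp
  rcases eq_or_ne y 0 with rfl | hy
  · simp
  have hxn : (0:ℝ) < ‖x‖ := norm_pos_iff.2 hx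
  have hyn : (0:ℝ) < ‖y‖ := norm_pos_iff.2 hy
  set a : ℝ := δ / (2 * ‖x‖) with ha
  set b : ℝ := δ / (2 * ‖y‖) with hb
  have hap : 0 < a := by positivity
  have hbp : 0 < b := by positivity
  have hkey : a * b * |B x y| < 1 := by
    have hd : dist ((a • x, b • y) : E × F) (0, 0) < δ := by
      rw [Prod.dist_eq]
      simp only [dist_zero_right, norm_smul, Real.norm_eq_abs, abs_of_pos hap, abs_of_pos hbp]
      have h1 : a * ‖x‖ = δ / 2 := by rw [ha]; field_simp
      have h2 : b * ‖y‖ = δ / 2 := by rw [hb]; field_simp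
      rw [h1, h2, max_self]; linarith
    have h' := hball hd
    rw [Real.dist_eq] at h'
    have heq : B (a • x) (b • y) = a * b * (B x y) := by
      simp only [LinearMap.map_smul₂, map_smul, LinearMap.smul_apply, smul_eq_mul]; ring
    rw [heq] at h'
    simp only [map_zero, LinearMap.zero_apply, sub_zero] at h'
    rw [abs_mul, abs_of_pos (by positivity : (0:ℝ) < a * b)] at h'
    exact h'
  have habval : a * b = δ^2 / (4 * ‖x‖ * ‖y‖) := by
    rw [ha, hb]; field_simp; ring
  have h2 : |B x y| < 1 / (a * b) := by
    rw [lt_div_iff₀ (by positivity)]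
    calc |B x y| * (a*b) = a * b * |B x y| := by ring
    _ < 1 := hkey
  have : 1 / (a*b) = 4 / δ^2 * ‖x‖ * ‖y‖ := by
    rw [habval]; field_simp
  rw [this] at h2; linarith

set_option maxHeartbeats 1000000 in
set_option synthInstance.maxHeartbeats 200000 in
/-- The remainder estimate for the memory (convolution) term in the semi-discrete
HMM error analysis. -/
theorem hmm_remainder_estimate_convolution
    {X : Type*} [NormedAddCommGroup X] [InnerProductSpace ℝ X] [CompleteSpace X]
    (α C_g : ℝ) (hα : 0 < α) (hCg : 0 < C_g)
    (m : X →ₗ[ℝ] X →ₗ[ℝ] ℝ)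
    (hmsymm : ∀ Φ Ψ : X, m Φ Ψ = m Ψ Φ)
    (hml : ∀ Φ : X, α * ‖Φ‖ ^ 2 ≤ m Φ Φ)
    (hmcont : Continuous fun p : X × X => m p.1 p.2)
    (VH : Submodule ℝ X) (hVH : IsClosed (VH : Set X))
    (mH : VH →ₗ[ℝ] VH →ₗ[ℝ] ℝ)
    (hmHsymm : ∀ ΦH ΨH : VH, mH ΦH ΨH = mH ΨH ΦH)
    (hmHcont : Continuous fun p : VH × VH => mH p.1 p.2)
    (hmHl : ∀ ΦH : VH, α * ‖ΦH‖ ^ 2 ≤ mH ΦH ΦH)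
    (PH : X → VH) (hPH : ∀ (Φ : X) (ΨH : VH), mH (PH Φ) ΨH = m Φ (ΨH : X))
    (g : ℝ → X →ₗ[ℝ] X →ₗ[ℝ] ℝ) (gH : ℝ → VH →ₗ[ℝ] VH →ₗ[ℝ] ℝ)
    (hg : ∀ τ : ℝ, 0 ≤ τ → ∀ Φ Ψ : X, |g τ Φ Ψ| ≤ C_g * ‖Φ‖ * ‖Ψ‖)
    (G : ℝ → X →L[ℝ] X) (GH : ℝ → VH →L[ℝ] VH)
    (hG : ∀ τ : ℝ, 0 ≤ τ → ∀ Φ Ψ : X, m (G τ Φ) Ψ = g τ Φ Ψ)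
    (hGH : ∀ τ : ℝ, 0 ≤ τ → ∀ ΦH ΨH : VH, mH (GH τ ΦH) ΨH = gH τ ΦH ΨH)
    (hGcont : ContinuousOn G (Set.Ici 0)) (hGHcont : ContinuousOn GH (Set.Ici 0))
    (s : ℝ) (hs : 0 ≤ s)
    (Φ : ℝ → X) (ΦI : ℝ → VH)
    (hΦ : ContinuousOn Φ (Set.Icc 0 s)) (hΦI : ContinuousOn ΦI (Set.Icc 0 s)) :
    Real.sqrt (mH (∫ ρ in (0:ℝ)..s, (PH (G (s - ρ) (Φ ρ)) - GH (s - ρ) (ΦI ρ)))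
        (∫ ρ in (0:ℝ)..s, (PH (G (s - ρ) (Φ ρ)) - GH (s - ρ) (ΦI ρ)))) ≤
      (C_g / Real.sqrt α) * (∫ ρ in (0:ℝ)..s, ‖Φ ρ - (ΦI ρ : X)‖) +
        sSup {c : ℝ | ∃ ΨH : VH, Real.sqrt (mH ΨH ΨH) ≤ 1 ∧
          c = |∫ ρ in (0:ℝ)..s,
                (g (s - ρ) ((ΦI ρ : X)) (ΨH : X) - gH (s - ρ) (ΦI ρ) ΨH)|} := by
  classical
  haveI : CompleteSpace VH := hVH.completeSpace_coe
  obtain ⟨Cm, hCm0, hCm⟩ := bilin_bound m hmcont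
  obtain ⟨CmH, hCmH0, hCmH⟩ := bilin_bound mH hmHcont
  have hsqα : (0:ℝ) < Real.sqrt α := Real.sqrt_pos.2 hα
  -- PH is Lipschitz
  have hPHlip : ∀ x y : X, ‖PH x - PH y‖ ≤ Cm / α * ‖x - y‖ := by
    intro x y
    set D : VH := PH x - PH y with hD
    have hDm : mH D D = m (x - y) ((D : X)) := by
      simp only [hD, map_sub, LinearMap.sub_apply, hPH, Submodule.coe_sub]
    have h1 : α * ‖D‖ ^ 2 ≤ Cm * ‖x - y‖ * ‖D‖ := by
      calc α * ‖D‖ ^ 2 ≤ mH D D := hmHl D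
        _ = m (x - y) (D : X) := hDm
        _ ≤ |m (x - y) (D : X)| := le_abs_self _
        _ ≤ Cm * ‖x - y‖ * ‖(D : X)‖ := hCm _ _
        _ = Cm * ‖x - y‖ * ‖D‖ := by rw [← Submodule.coe_norm]
    rcases eq_or_lt_of_le (norm_nonneg D) with h0 | h0
    · rw [← h0]; positivity
    · rw [div_mul_eq_mul_div, le_div_iff₀ hα]
      nlinarith
  have hPHcont : Continuous PH := by
    have hlip : LipschitzWith (Real.toNNReal (Cm / α)) PH := by
      apply LipschitzWith.of_dist_le_mul
      intro x y
      rw [dist_eq_norm, dist_eq_norm, Real.coe_toNNReal _ (by positivity)]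
      exact hPHlip x y
    exact hlip.continuous
  -- continuity of the integrand
  have hsubc : ContinuousOn (fun ρ : ℝ => s - ρ) (Set.Icc 0 s) :=
    (continuous_const.sub continuous_id).continuousOn
  have hmaps : ∀ ρ ∈ Set.Icc (0:ℝ) s, s - ρ ∈ Set.Ici (0:ℝ) := fun ρ hρ => sub_nonneg.2 hρ.2
  have hGν : ContinuousOn (fun ρ => G (s - ρ)) (Set.Icc 0 s) := hGcont.comp hsubc hmaps
  have hGHν : ContinuousOn (fun ρ => GH (s - ρ)) (Set.Icc 0 s) := hGHcont.comp hsubc hmaps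
  have hΦIX : ContinuousOn (fun ρ => (ΦI ρ : X)) (Set.Icc 0 s) :=
    continuous_subtype_val.comp_continuousOn hΦI
  set f : ℝ → VH := fun ρ => PH (G (s - ρ) (Φ ρ)) - GH (s - ρ) (ΦI ρ) with hf
  have hfc : ContinuousOn f (Set.Icc 0 s) :=
    (hPHcont.comp_continuousOn (hGν.clm_apply hΦ)).sub (hGHν.clm_apply hΦI)
  have hfint : IntervalIntegrable f MeasureTheory.volume 0 s :=
    (hfc.mono (Set.uIcc_of_le hs).subset).intervalIntegrable
  set E := ∫ ρ in (0:ℝ)..s, f ρ with hE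
  -- pairing with a test function passes through the integral
  have pairing : ∀ Ψ : VH, mH E Ψ = ∫ ρ in (0:ℝ)..s, mH (f ρ) Ψ := by
    intro Ψ
    have hLc : Continuous fun x : VH => mH x Ψ :=
      hmHcont.comp (continuous_id.prodMk continuous_const)
    let L : VH →L[ℝ] ℝ := { toLinearMap := mH.flip Ψ, cont := hLc }
    have h := L.intervalIntegral_comp_comm hfint
    exact h.symm
  -- pointwise identity
  have hpt : ∀ Ψ : VH, ∀ ρ ∈ Set.Icc (0:ℝ) s,
      mH (f ρ) Ψ = g (s - ρ) (Φ ρ) (Ψ : X) - gH (s - ρ) (ΦI ρ) Ψ := by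
    intro Ψ ρ hρ
    have hτ : (0:ℝ) ≤ s - ρ := sub_nonneg.2 hρ.2
    simp only [hf, map_sub, LinearMap.sub_apply]
    rw [hPH, hG _ hτ, hGH _ hτ]
  have hEEnn : (0:ℝ) ≤ mH E E := le_trans (by positivity) (hmHl E)
  set N := Real.sqrt (mH E E) with hN
  have hNnn : 0 ≤ N := Real.sqrt_nonneg _
  have hN2 : N ^ 2 = mH E E := Real.sq_sqrt hEEnn
  have hEnorm : ‖E‖ ≤ N / Real.sqrt α := by
    rw [le_div_iff₀ hsqα]
    have h1 : Real.sqrt (α * ‖E‖ ^ 2) ≤ N := by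
      rw [hN]; exact Real.sqrt_le_sqrt (hmHl E)
    rwa [Real.sqrt_mul hα.le, Real.sqrt_sq (norm_nonneg _),
      mul_comm (Real.sqrt α) ‖E‖] at h1
  set S : Set ℝ := {c : ℝ | ∃ ΨH : VH, Real.sqrt (mH ΨH ΨH) ≤ 1 ∧
      c = |∫ ρ in (0:ℝ)..s,
            (g (s - ρ) ((ΦI ρ : X)) (ΨH : X) - gH (s - ρ) (ΦI ρ) ΨH)|} with hSdef
  have h0S : (0:ℝ) ∈ S := by
    refine ⟨0, by simp, ?_⟩
    simp
  have hΨnorm : ∀ Ψ : VH, Real.sqrt (mH Ψ Ψ) ≤ 1 → ‖(Ψ : X)‖ ≤ 1 / Real.sqrt α := by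
    intro Ψ hΨ
    have hnn : (0:ℝ) ≤ mH Ψ Ψ := le_trans (by positivity) (hmHl Ψ)
    have h1 : mH Ψ Ψ ≤ 1 := by
      calc mH Ψ Ψ = Real.sqrt (mH Ψ Ψ) ^ 2 := (Real.sq_sqrt hnn).symm
        _ ≤ 1 := by nlinarith [Real.sqrt_nonneg (mH Ψ Ψ)]
    have h2 : α * ‖Ψ‖ ^ 2 ≤ 1 := le_trans (hmHl Ψ) h1
    rw [← Submodule.coe_norm, le_div_iff₀ hsqα]
    nlinarith [Real.sq_sqrt hα.le, mul_nonneg (norm_nonneg Ψ) (Real.sqrt_nonneg α)]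
  obtain ⟨MΦ, hMΦ⟩ := isCompact_Icc.exists_bound_of_continuousOn hΦI
  obtain ⟨MG, hMG⟩ := (isCompact_Icc : IsCompact (Set.Icc (0:ℝ) s)).exists_bound_of_continuousOn
    (f := GH) (by exact hGHcont.mono Set.Icc_subset_Ici_self)
  set K : ℝ := (C_g * max MΦ 0 + CmH * (max MG 0 * max MΦ 0)) * (1 / Real.sqrt α) with hK
  have hSbd : BddAbove S := by
    refine ⟨K * s, fun c hc => ?_⟩
    obtain ⟨Ψ, hΨ1, rfl⟩ := hc
    have hΨn := hΨnorm Ψ hΨ1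
    have hb : ∀ ρ ∈ Set.uIoc (0:ℝ) s,
        ‖g (s - ρ) ((ΦI ρ : X)) (Ψ : X) - gH (s - ρ) (ΦI ρ) Ψ‖ ≤ K := by
      intro ρ hρ
      rw [Set.uIoc_of_le hs] at hρ
      have hρ' : ρ ∈ Set.Icc (0:ℝ) s := ⟨hρ.1.le, hρ.2⟩
      have hτ : (0:ℝ) ≤ s - ρ := sub_nonneg.2 hρ.2
      have hτ' : s - ρ ∈ Set.Icc (0:ℝ) s := ⟨hτ, by linarith [hρ.1]⟩
      have hΦIbd : ‖(ΦI ρ : X)‖ ≤ max MΦ 0 := by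
        rw [← Submodule.coe_norm]; exact le_trans (hMΦ ρ hρ') (le_max_left _ _)
      have hg1 : |g (s - ρ) ((ΦI ρ : X)) (Ψ : X)| ≤ C_g * max MΦ 0 * (1 / Real.sqrt α) := by
        refine le_trans (hg _ hτ _ _) ?_
        have : (0:ℝ) ≤ max MΦ 0 := le_max_right _ _
        exact mul_le_mul (mul_le_mul_of_nonneg_left hΦIbd hCg.le) hΨn (norm_nonneg _)
          (by positivity)
      have hg2 : |gH (s - ρ) (ΦI ρ) Ψ| ≤
          CmH * (max MG 0 * max MΦ 0) * (1 / Real.sqrt α) := by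
        rw [← hGH _ hτ]
        refine le_trans (hCmH _ _) ?_
        have hGHbd : ‖GH (s - ρ) (ΦI ρ)‖ ≤ max MG 0 * max MΦ 0 := by
          calc ‖GH (s - ρ) (ΦI ρ)‖ ≤ ‖GH (s - ρ)‖ * ‖ΦI ρ‖ :=
              ContinuousLinearMap.le_opNorm _ _
            _ ≤ max MG 0 * max MΦ 0 := by
              apply mul_le_mul (le_trans (hMG _ hτ') (le_max_left _ _))
              · rw [Submodule.coe_norm]; exact hΦIbd
              · exact norm_nonneg _
              · exact le_max_right _ _
        have hΨn' : ‖Ψ‖ ≤ 1 / Real.sqrt α := by rw [Submodule.coe_norm]; exact hΨn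
        exact mul_le_mul (mul_le_mul_of_nonneg_left hGHbd hCmH0.le) hΨn' (norm_nonneg _)
          (by positivity)
      have habs : |g (s - ρ) ((ΦI ρ : X)) (Ψ : X) - gH (s - ρ) (ΦI ρ) Ψ| ≤
          |g (s - ρ) ((ΦI ρ : X)) (Ψ : X)| + |gH (s - ρ) (ΦI ρ) Ψ| := by
        rw [sub_eq_add_neg]
        exact le_trans (abs_add_le _ _) (by rw [abs_neg])
      rw [Real.norm_eq_abs]
      calc |g (s - ρ) ((ΦI ρ : X)) (Ψ : X) - gH (s - ρ) (ΦI ρ) Ψ| ≤ _ + _ := habs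
        _ ≤ C_g * max MΦ 0 * (1 / Real.sqrt α) +
            CmH * (max MG 0 * max MΦ 0) * (1 / Real.sqrt α) := add_le_add hg1 hg2
        _ = K := by rw [hK]; ring
    have hni := intervalIntegral.norm_integral_le_of_norm_le_const hb
    rw [Real.norm_eq_abs, sub_zero, abs_of_nonneg hs] at hni
    exact hni
  have hSup0 : 0 ≤ sSup S := le_csSup hSbd h0S
  set I := ∫ ρ in (0:ℝ)..s, ‖Φ ρ - (ΦI ρ : X)‖ with hI
  have hInn : 0 ≤ I :=
    intervalIntegral.integral_nonneg hs fun u _ => norm_nonneg _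
  rcases eq_or_lt_of_le hNnn with hN0 | hNpos
  · rw [← hN0]
    exact add_nonneg (mul_nonneg (by positivity) hInn) hSup0
  · set A : ℝ → ℝ := fun ρ => g (s - ρ) (Φ ρ - (ΦI ρ : X)) (E : X) with hA
    set B : ℝ → ℝ := fun ρ =>
      g (s - ρ) ((ΦI ρ : X)) (E : X) - gH (s - ρ) (ΦI ρ) E with hB
    have hAc : ContinuousOn A (Set.Icc 0 s) := by
      have h1 : ContinuousOn (fun ρ => m (G (s - ρ) (Φ ρ - (ΦI ρ : X))) ((E : X)))
          (Set.Icc 0 s) :=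
        hmcont.comp_continuousOn ((hGν.clm_apply (hΦ.sub hΦIX)).prodMk continuousOn_const)
      exact h1.congr fun ρ hρ => by
        simp only [hA]; rw [hG _ (sub_nonneg.2 hρ.2)]
    have hBc : ContinuousOn B (Set.Icc 0 s) := by
      have h1 : ContinuousOn (fun ρ => m (G (s - ρ) ((ΦI ρ : X))) ((E : X)) -
          mH (GH (s - ρ) (ΦI ρ)) E) (Set.Icc 0 s) := by
        apply ContinuousOn.sub
        · exact hmcont.comp_continuousOn ((hGν.clm_apply hΦIX).prodMk continuousOn_const)
        · exact hmHcont.comp_continuousOn ((hGHν.clm_apply hΦI).prodMk continuousOn_const)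
      exact h1.congr fun ρ hρ => by
        simp only [hB]
        rw [hG _ (sub_nonneg.2 hρ.2), hGH _ (sub_nonneg.2 hρ.2)]
    have hAint : IntervalIntegrable A MeasureTheory.volume 0 s :=
      (hAc.mono (Set.uIcc_of_le hs).subset).intervalIntegrable
    have hBint : IntervalIntegrable B MeasureTheory.volume 0 s :=
      (hBc.mono (Set.uIcc_of_le hs).subset).intervalIntegrable
    have hsplit : mH E E = (∫ ρ in (0:ℝ)..s, A ρ) + ∫ ρ in (0:ℝ)..s, B ρ := by
      rw [pairing E, ← intervalIntegral.integral_add hAint hBint]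
      apply intervalIntegral.integral_congr
      intro ρ hρ
      rw [Set.uIcc_of_le hs] at hρ
      have := hpt E ρ hρ
      simp only [hA, hB, map_sub, LinearMap.sub_apply] at this ⊢
      rw [this]; ring
    have hAbd : (∫ ρ in (0:ℝ)..s, A ρ) ≤ (C_g / Real.sqrt α * I) * N := by
      have hmono : (∫ ρ in (0:ℝ)..s, A ρ) ≤
          ∫ ρ in (0:ℝ)..s, C_g * ‖E‖ * ‖Φ ρ - (ΦI ρ : X)‖ := by
        apply intervalIntegral.integral_mono_on hs hAint
        · exact ((continuousOn_const.mul (hΦ.sub hΦIX).norm).mono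
            (Set.uIcc_of_le hs).subset).intervalIntegrable
        · intro ρ hρ
          have hτ : (0:ℝ) ≤ s - ρ := sub_nonneg.2 hρ.2
          calc A ρ ≤ |A ρ| := le_abs_self _
            _ ≤ C_g * ‖Φ ρ - (ΦI ρ : X)‖ * ‖(E : X)‖ := by
              simp only [hA]; exact hg _ hτ _ _
            _ = C_g * ‖E‖ * ‖Φ ρ - (ΦI ρ : X)‖ := by
              rw [← Submodule.coe_norm]; ring
      rw [intervalIntegral.integral_const_mul] at hmono
      calc (∫ ρ in (0:ℝ)..s, A ρ) ≤ C_g * ‖E‖ * I := hmono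
        _ ≤ C_g * (N / Real.sqrt α) * I :=
          mul_le_mul_of_nonneg_right (mul_le_mul_of_nonneg_left hEnorm hCg.le) hInn
        _ = (C_g / Real.sqrt α * I) * N := by field_simp
    have hBbd : (∫ ρ in (0:ℝ)..s, B ρ) ≤ sSup S * N := by
      set Ψ₀ : VH := N⁻¹ • E with hΨ₀
      have hmm1 : mH Ψ₀ Ψ₀ = 1 := by
        simp only [hΨ₀, map_smul, LinearMap.smul_apply, smul_eq_mul]
        rw [← hN2]; field_simp
      have hmem : |∫ ρ in (0:ℝ)..s,
          (g (s - ρ) ((ΦI ρ : X)) ((Ψ₀ : X)) - gH (s - ρ) (ΦI ρ) Ψ₀)| ∈ S :=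
        ⟨Ψ₀, by rw [hmm1, Real.sqrt_one], rfl⟩
      have hle := le_csSup hSbd hmem
      have hint0 : (∫ ρ in (0:ℝ)..s,
          (g (s - ρ) ((ΦI ρ : X)) ((Ψ₀ : X)) - gH (s - ρ) (ΦI ρ) Ψ₀)) =
          N⁻¹ * ∫ ρ in (0:ℝ)..s, B ρ := by
        rw [← intervalIntegral.integral_const_mul]
        apply intervalIntegral.integral_congr
        intro ρ hρ
        simp only [hΨ₀, hB, SetLike.val_smul, map_smul, smul_eq_mul]
        ring
      rw [hint0, abs_mul, abs_of_pos (inv_pos.2 hNpos)] at hle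
      calc (∫ ρ in (0:ℝ)..s, B ρ) ≤ |∫ ρ in (0:ℝ)..s, B ρ| := le_abs_self _
        _ = N * (N⁻¹ * |∫ ρ in (0:ℝ)..s, B ρ|) := by field_simp
        _ ≤ N * sSup S := mul_le_mul_of_nonneg_left hle hNnn
        _ = sSup S * N := mul_comm _ _
    have hfinal : N * N ≤ (C_g / Real.sqrt α * I + sSup S) * N := by
      have hNN : N * N = mH E E := by rw [← hN2]; ring
      rw [hNN, hsplit, add_mul]
      exact add_le_add hAbd hBbd
    exact le_of_mul_le_mul_right hfinal hNpos
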